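/- Let s, t, k be positive integers with s/2 < k ≤ s, and let x, y ∈ Σ^{s+k} with d_H(x,y) ≤ t and y periodic with period k (y_{[s]} = y_{k+[s]}). Write I_1=[0,s−k), I_2=[s−k,k), I_3=[k,s), I_4=[s,2k), I_5=[2k,s+k), so that y = y_{I_1} y_{I_2} y_{I_1} y_{I_2} y_{I_1}. Then the string y' := y_{I_1} x_{I_2} y_{I_1} x_{I_2} y_{I_1} also has period k and satisfies d_H(x, y') ≤ d_H(x, y) ≤ t. -/

import Mathlib

/-- Hamming distance between the length-`n` prefixes of `x` and `y`. -/
def dH {α : Type*} [DecidableEq α] (x y : ℕ → α) (n : ℕ) : ℕ :=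
  ((Finset.range n).filter (fun i => x i ≠ y i)).card

/-- for `s/2 < k ≤ s`, `x, y ∈ Σ^{s+k}` with `d_H(x,y) ≤ t` and `y`
`k`-periodic (so `y = y_{I₁} y_{I₂} y_{I₁} y_{I₂} y_{I₁}` along
`I₁ = [0, s-k), I₂ = [s-k, k), I₃ = [k, s), I₄ = [s, 2k), I₅ = [2k, s+k)`),
the string `y' = y_{I₁} x_{I₂} y_{I₁} x_{I₂} y_{I₁}` is also `k`-periodic and
satisfies `d_H(x, y') ≤ d_H(x, y) ≤ t`. -/
theorem stmt14 {α : Type*} [DecidableEq α] (s t k : ℕ)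
    (hk : k ≤ s) (hk2 : s < 2 * k) (x y : ℕ → α)
    (hd : dH x y (s + k) ≤ t)
    (hper : ∀ i, i < s → y i = y (i + k)) :
    ∀ y' : ℕ → α,
      (y' = fun i =>
        if i < s - k then y i
        else if i < k then x i
        else if i < s then y (i - k)
        else if i < 2 * k then x (i - k)
        else y (i - 2 * k)) →
      (∀ i, i < s → y' i = y' (i + k)) ∧
        dH x y' (s + k) ≤ dH x y (s + k) ∧ dH x y (s + k) ≤ t := by
  intro y' hy'
  subst hy'
  refine ⟨?_, ?_, hd⟩
  · intro i hi
    simp only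
    split_ifs <;> first | omega | (congr 1; omega)
  · have key : ∀ i, i < s + k →
        x i ≠ (if i < s - k then y i else if i < k then x i else if i < s then y (i - k)
          else if i < 2 * k then x (i - k) else y (i - 2 * k)) →
        x i ≠ y i ∨ (x i = y i ∧ s ≤ i ∧ i < 2 * k ∧ x (i - k) ≠ y (i - k)) := by
      intro i hlt hne
      by_cases hxy : x i = y i
      · right
        split_ifs at hne with h1 h2 h3 h4
        · exact absurd hxy hne
        · exact absurd rfl hne
        · have hp := hper (i - k) (by omega)
          rw [Nat.sub_add_cancel (by omega)] at hp
          exact absurd (hxy.trans hp.symm) hne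
        · refine ⟨hxy, by omega, h4, fun hc => hne ?_⟩
          have hp := hper (i - k) (by omega)
          rw [Nat.sub_add_cancel (by omega)] at hp
          exact hxy.trans (hp.symm.trans hc.symm)
        · have hp1 := hper (i - 2 * k) (by omega)
          rw [show i - 2 * k + k = i - k by omega] at hp1
          have hp2 := hper (i - k) (by omega)
          rw [Nat.sub_add_cancel (by omega)] at hp2
          exact absurd (hxy.trans (hp2.symm.trans hp1.symm)) hne
      · exact Or.inl hxy
    apply Finset.card_le_card_of_injOn (fun i => if x i = y i then i - k else i)
    · intro i hi
      simp only [Finset.mem_coe, Finset.mem_filter, Finset.mem_range] at hi ⊢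
      rcases key i hi.1 hi.2 with h | ⟨he, h1, h2, h3⟩
      · rw [if_neg h]; exact ⟨hi.1, h⟩
      · rw [if_pos he]; exact ⟨by omega, h3⟩
    · intro a ha b hb hab
      simp only [Finset.mem_coe, Finset.mem_filter, Finset.mem_range] at ha hb
      simp only at hab
      rcases key a ha.1 ha.2 with h | ⟨he, h1, h2, h3⟩ <;>
        rcases key b hb.1 hb.2 with h' | ⟨he', h1', h2', h3'⟩
      · rwa [if_neg h, if_neg h'] at hab
      · rw [if_neg h, if_pos he'] at hab
        exfalso
        have h2a := ha.2
        rw [if_neg (by omega : ¬ a < s - k), if_pos (by omega : a < k)] at h2a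
        exact h2a rfl
      · rw [if_pos he, if_neg h'] at hab
        exfalso
        have h2b := hb.2
        rw [if_neg (by omega : ¬ b < s - k), if_pos (by omega : b < k)] at h2b
        exact h2b rfl
      · rw [if_pos he, if_pos he'] at hab
        omega
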